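/- Let ρ ≥ 0, and let s, t be reals with ρ ≤ s ≤ √(ρ²+1) and ρ ≤ t ≤ √(ρ²+1). Let x, y ∈ ℝ^d with ‖x‖² ≤ t² − ρ² and ‖y‖² ≤ s² − ρ², and let u, v ∈ [−1,1]. Define ξ := (⟨x,y⟩ + u·√(t² − ρ² − ‖x‖²)·√(s² − ρ² − ‖y‖²))·sign(st) + v·√(1 + ρ² − s²)·√(1 + ρ² − t²). Then |ξ| ≤ 1. -/

import Mathlib

open Real

private lemma aux1 (nx ny a b p q : ℝ)
    (ha : 0 ≤ a) (hb : 0 ≤ b) (hp : 0 ≤ p) (hq : 0 ≤ q)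
    (hnx : 0 ≤ nx) (hny : 0 ≤ ny)
    (h1 : nx^2 + a^2 = p^2) (h2 : ny^2 + b^2 = q^2) : nx*ny + a*b ≤ p*q := by
  nlinarith [sq_nonneg (nx*b - ny*a), mul_nonneg hp hq, mul_nonneg hnx hny,
    mul_nonneg ha hb, sq_nonneg (nx*ny + a*b - p*q)]

private lemma aux2 (p q c e : ℝ) (hp : 0 ≤ p) (hq : 0 ≤ q) (hc : 0 ≤ c) (he : 0 ≤ e)
    (h : (p^2 + c^2) * (q^2 + e^2) ≤ 1) : p*q + c*e ≤ 1 := by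
  nlinarith [sq_nonneg (p*e - q*c), mul_nonneg hp hq, mul_nonneg hc he]

set_option maxHeartbeats 1000000 in
private lemma main_aux (ρ s t nx ny ip u v g : ℝ) (hρ : 0 ≤ ρ)
    (hs1 : ρ ≤ s) (hs2 : s ≤ Real.sqrt (ρ^2 + 1))
    (ht1 : ρ ≤ t) (ht2 : t ≤ Real.sqrt (ρ^2 + 1))
    (hnx : 0 ≤ nx) (hny : 0 ≤ ny)
    (hx : nx^2 ≤ t^2 - ρ^2) (hy : ny^2 ≤ s^2 - ρ^2)
    (hip : |ip| ≤ nx * ny)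
    (hu : |u| ≤ 1) (hv : |v| ≤ 1) (hg : |g| ≤ 1) :
    |(ip + u * Real.sqrt (t^2 - ρ^2 - nx^2) * Real.sqrt (s^2 - ρ^2 - ny^2)) * g
      + v * Real.sqrt (1 + ρ^2 - s^2) * Real.sqrt (1 + ρ^2 - t^2)| ≤ 1 := by
  have hs0 : 0 ≤ s := hρ.trans hs1
  have ht0 : 0 ≤ t := hρ.trans ht1
  have hsq : Real.sqrt (ρ^2+1) ^ 2 = ρ^2 + 1 := Real.sq_sqrt (by positivity)
  have hs2' : s^2 ≤ ρ^2 + 1 := by nlinarith [Real.sqrt_nonneg (ρ^2+1)]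
  have ht2' : t^2 ≤ ρ^2 + 1 := by nlinarith [Real.sqrt_nonneg (ρ^2+1)]
  set a := Real.sqrt (t^2 - ρ^2 - nx^2) with hadef
  set b := Real.sqrt (s^2 - ρ^2 - ny^2) with hbdef
  set c := Real.sqrt (1 + ρ^2 - s^2) with hcdef
  set e := Real.sqrt (1 + ρ^2 - t^2) with hedef
  have ha0 : 0 ≤ a := Real.sqrt_nonneg _
  have hb0 : 0 ≤ b := Real.sqrt_nonneg _
  have hc0 : 0 ≤ c := Real.sqrt_nonneg _
  have he0 : 0 ≤ e := Real.sqrt_nonneg _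
  have ha2 : a^2 = t^2 - ρ^2 - nx^2 := Real.sq_sqrt (by linarith)
  have hb2 : b^2 = s^2 - ρ^2 - ny^2 := Real.sq_sqrt (by linarith)
  have hc2 : c^2 = 1 + ρ^2 - s^2 := Real.sq_sqrt (by linarith)
  have he2 : e^2 = 1 + ρ^2 - t^2 := Real.sq_sqrt (by linarith)
  set p := Real.sqrt (t^2 - ρ^2) with hpdef
  set q := Real.sqrt (s^2 - ρ^2) with hqdef
  have hp0 : 0 ≤ p := Real.sqrt_nonneg _
  have hq0 : 0 ≤ q := Real.sqrt_nonneg _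
  have hp2 : p^2 = t^2 - ρ^2 := Real.sq_sqrt (by nlinarith)
  have hq2 : q^2 = s^2 - ρ^2 := Real.sq_sqrt (by nlinarith)
  have hA : |ip + u * a * b| ≤ p * q := by
    have h1 : |ip + u * a * b| ≤ nx * ny + a * b :=
      calc |ip + u * a * b| ≤ |ip| + |u * a * b| := abs_add_le _ _
        _ ≤ nx * ny + a * b := by
            have h3 : |u * a * b| = |u| * (a * b) := by
              rw [abs_mul, abs_mul, abs_of_nonneg ha0, abs_of_nonneg hb0, mul_assoc]
            have h4 : |u| * (a * b) ≤ 1 * (a * b) :=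
              mul_le_mul_of_nonneg_right hu (mul_nonneg ha0 hb0)
            rw [h3]; linarith
    have h2 : nx * ny + a * b ≤ p * q :=
      aux1 nx ny a b p q ha0 hb0 hp0 hq0 hnx hny (by linarith) (by linarith)
    linarith
  have hfin : p * q + c * e ≤ 1 := by
    apply aux2 p q c e hp0 hq0 hc0 he0
    nlinarith [sq_nonneg (t^2 - s^2)]
  have hB : |v * c * e| ≤ c * e := by
    rw [abs_mul, abs_mul, abs_of_nonneg hc0, abs_of_nonneg he0]
    have h4 : |v| * c * e ≤ 1 * c * e :=
      mul_le_mul_of_nonneg_right (mul_le_mul_of_nonneg_right hv hc0) he0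
    linarith
  have hAs : |(ip + u * a * b) * g| ≤ p * q := by
    rw [abs_mul]
    calc |ip + u * a * b| * |g| ≤ |ip + u * a * b| * 1 :=
          mul_le_mul_of_nonneg_left hg (abs_nonneg _)
      _ = |ip + u * a * b| := mul_one _
      _ ≤ p * q := hA
  calc |(ip + u * a * b) * g + v * c * e|
      ≤ |(ip + u * a * b) * g| + |v * c * e| := abs_add_le _ _
    _ ≤ p * q + c * e := add_le_add hAs hB
    _ ≤ 1 := hfin

theorem stmt_0 (d : ℕ) (ρ s t : ℝ) (hρ : 0 ≤ ρ)
    (hs1 : ρ ≤ s) (hs2 : s ≤ Real.sqrt (ρ^2 + 1))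
    (ht1 : ρ ≤ t) (ht2 : t ≤ Real.sqrt (ρ^2 + 1))
    (x y : EuclideanSpace ℝ (Fin d))
    (hx : ‖x‖^2 ≤ t^2 - ρ^2) (hy : ‖y‖^2 ≤ s^2 - ρ^2)
    (u v : ℝ) (hu : u ∈ Set.Icc (-1 : ℝ) 1) (hv : v ∈ Set.Icc (-1 : ℝ) 1) :
    |((inner ℝ x y : ℝ) + u * Real.sqrt (t^2 - ρ^2 - ‖x‖^2) * Real.sqrt (s^2 - ρ^2 - ‖y‖^2))
        * Real.sign (s * t)
      + v * Real.sqrt (1 + ρ^2 - s^2) * Real.sqrt (1 + ρ^2 - t^2)| ≤ 1 := by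
  have hg : |Real.sign (s*t)| ≤ 1 := by
    rcases lt_trichotomy (s*t) 0 with h|h|h
    · simp [Real.sign_of_neg h]
    · simp [h]
    · simp [Real.sign_of_pos h]
  exact main_aux ρ s t ‖x‖ ‖y‖ (inner ℝ x y) u v (Real.sign (s*t)) hρ hs1 hs2 ht1 ht2
    (norm_nonneg x) (norm_nonneg y) hx hy (abs_real_inner_le_norm x y)
    (abs_le.mpr ⟨hu.1, hu.2⟩) (abs_le.mpr ⟨hv.1, hv.2⟩) hg
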